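/- π₁ preserves exactness: Let (F, φ, G) be an exact sequence of pointed groupoids, i.e. F : A → B and G : B → C are pointed functors, φ is a family of morphisms φ_a : *_C → G(F(a)) natural in a with φ_{*_A} = id, and the canonical comparison F′ : A → K(G), a ↦ (F(a), φ_a⁻¹), is full and essentially surjective. Then the sequence of groups π₁(A) → π₁(B) → π₁(C), with maps π₁(F) and π₁(G), is exact: the image of π₁(F) equals the kernel of π₁(G). -/

import Mathlib

open CategoryTheory

universe w v₁ v₂ v₃ v₄ u₁ u₂ u₃ u₄

namespace Snail

variable {A : Type u₁} [Groupoid.{v₁} A] {B : Type u₂} [Groupoid.{v₂} B]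

/-- The set of connected components (isomorphism classes of objects) of a groupoid. -/
def Pi0 (A : Type u₁) [Groupoid.{v₁} A] : Type u₁ :=
  Quotient (CategoryTheory.isIsomorphicSetoid A)

/-- The connected component of an object. -/
def pi0 (a : A) : Pi0 A := Quotient.mk (CategoryTheory.isIsomorphicSetoid A) a

/-- The map induced on connected components by a functor; for pointed functors
between pointed groupoids this is the induced pointed map `π₀(F)`. -/
def pi0Map (F : A ⥤ B) : Pi0 A → Pi0 B :=
  Quotient.map F.obj fun _ _ h => Nonempty.map (fun i => F.mapIso i) h

/-- The group homomorphism `π₁(F) : Aut (*_A) →* Aut (*_B)` induced by a pointed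
functor `F` (with `F.obj pA = pB`). -/
def pi1Map (F : A ⥤ B) {pA : A} {pB : B} (h : F.obj pA = pB) : Aut pA →* Aut pB :=
  (Aut.autMulEquivOfIso (eqToIso h)).toMonoidHom.comp (F.mapAut pA)

/-- The strong homotopy kernel `K(F)` of a functor `F : A ⥤ B` with respect to the
basepoint `pB` of `B` : objects are pairs `(a, β : F a ⟶ pB)`. -/
structure HKer (F : A ⥤ B) (pB : B) : Type (max u₁ v₂) where
  pt : A
  arr : F.obj pt ⟶ pB

/-- Morphisms `(a, β) ⟶ (a', β')` in `K(F)` are morphisms `f : a ⟶ a'` of `A` with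
`F.map f ≫ β' = β`. -/
instance hkerGroupoid (F : A ⥤ B) (pB : B) : Groupoid (HKer F pB) where
  Hom x y := { f : x.pt ⟶ y.pt // F.map f ≫ y.arr = x.arr }
  id x := ⟨𝟙 x.pt, by simp⟩
  comp {x y z} f g := ⟨f.1 ≫ g.1, by rw [F.map_comp, Category.assoc, g.2, f.2]⟩
  id_comp f := Subtype.ext (Category.id_comp f.1)
  comp_id f := Subtype.ext (Category.comp_id f.1)
  assoc f g h := Subtype.ext (Category.assoc f.1 g.1 h.1)
  inv {x y} f := ⟨Groupoid.inv f.1, by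
    obtain ⟨g, h⟩ := f
    dsimp only
    rw [← h, ← Category.assoc, ← F.map_comp, Groupoid.inv_comp, F.map_id, Category.id_comp]⟩
  inv_comp f := Subtype.ext (Groupoid.inv_comp f.1)
  comp_inv f := Subtype.ext (Groupoid.comp_inv f.1)

/-- The projection functor `P : K(F) ⥤ A`, `(a, β) ↦ a`, `f ↦ f`. -/
def hkerProj (F : A ⥤ B) (pB : B) : HKer F pB ⥤ A where
  obj x := x.pt
  map f := f.1
  map_id _ := rfl
  map_comp _ _ := rfl


variable {C : Type u₃} [Groupoid.{v₃} C]

/-- The canonical comparison functor `F' : A ⥤ K(G)` associated with pointed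
functors `F : A ⥤ B`, `G : B ⥤ C` and a natural family `φ_a : *_C ⟶ G (F a)` :
it sends `a` to `(F a, φ_a⁻¹)` and `f` to `F f`. -/
def exactComparison (F : A ⥤ B) (G : B ⥤ C) {pC : C}
    (φ : (Functor.const A).obj pC ⟶ F ⋙ G) : A ⥤ HKer G pC where
  obj a := ⟨F.obj a, Groupoid.inv (φ.app a)⟩
  map {a a'} f := ⟨F.map f, by
    have nat := φ.naturality f
    simp only [Functor.comp_map, Functor.const_obj_map, Category.id_comp] at nat
    dsimp only
    simp only [Groupoid.inv_eq_inv]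
    rw [IsIso.comp_inv_eq, IsIso.eq_inv_comp, ← nat]
    simp⟩
  map_id a := Subtype.ext (F.map_id a)
  map_comp f g := Subtype.ext (F.map_comp f g)

/-- **`π₁` preserves exactness.** If `(F, φ, G)` is an exact sequence of pointed
groupoids (the comparison `F' : A ⥤ K(G)` is full and essentially surjective), then
`π₁(A) → π₁(B) → π₁(C)` is exact: the image of `π₁(F)` is the kernel of `π₁(G)`. -/
theorem pi1_preserves_exactness {A : Type u₁} [Groupoid.{v₁} A] {B : Type u₂}
    [Groupoid.{v₂} B] {C : Type u₃} [Groupoid.{v₃} C]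
    (F : A ⥤ B) (G : B ⥤ C) (pA : A) (pB : B) (pC : C)
    (hF : F.obj pA = pB) (hG : G.obj pB = pC)
    (φ : (Functor.const A).obj pC ⟶ F ⋙ G)
    (hφ : φ.app pA = eqToHom (by rw [hF, hG] : pC = G.obj (F.obj pA)))
    (hfull : ∀ x y : A,
      Function.Surjective fun f : x ⟶ y => (exactComparison F G φ).map f)
    (hess : ∀ k : HKer G pC,
      ∃ a : A, Nonempty ((exactComparison F G φ).obj a ≅ k)) :
    ∀ b : Aut pB, (∃ a : Aut pA, pi1Map F hF a = b) ↔ pi1Map G hG b = 1 := by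
  intro b
  constructor
  · rintro ⟨a, rfl⟩
    apply Iso.ext
    have nat := φ.naturality a.hom
    rw [hφ] at nat
    simp only [Functor.comp_map, Functor.const_obj_map, Category.id_comp] at nat
    have key : G.map (F.map a.hom) = 𝟙 _ := by
      have := (eqToIso (by rw [hF, hG] : pC = G.obj (F.obj pA))).inv ≫= nat
      simpa using this.symm
    simp [pi1Map, Aut.autMulEquivOfIso, Functor.mapAut, key, eqToHom_map]
    change eqToHom hG.symm ≫ G.map (eqToHom hF.symm ≫ F.map a.hom ≫ eqToHom hF) ≫ eqToHom hG = 𝟙 pC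
    simp [key, eqToHom_map]
  · intro hb
    have hbhom : eqToHom hG.symm ≫ G.map b.hom ≫ eqToHom hG = 𝟙 pC :=
      congrArg Iso.hom hb
    have hb' : G.map b.hom = 𝟙 (G.obj pB) := by
      have := eqToHom hG ≫= hbhom =≫ eqToHom hG.symm
      simpa using this
    have hcond : G.map (eqToHom hF ≫ b.hom ≫ eqToHom hF.symm) ≫
        Groupoid.inv (φ.app pA) = Groupoid.inv (φ.app pA) := by
      simp [hb', eqToHom_map]
    obtain ⟨f₀, hf₀⟩ := hfull pA pA ⟨eqToHom hF ≫ b.hom ≫ eqToHom hF.symm, hcond⟩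
    have hf₀' : F.map f₀ = eqToHom hF ≫ b.hom ≫ eqToHom hF.symm :=
      congrArg Subtype.val hf₀
    refine ⟨(Groupoid.isoEquivHom pA pA).symm f₀, ?_⟩
    apply Iso.ext
    simp [pi1Map, Aut.autMulEquivOfIso, Functor.mapAut, hf₀', Groupoid.isoEquivHom]
    change eqToHom hF.symm ≫ F.map f₀ ≫ eqToHom hF = b.hom
    simp [hf₀']

end Snail
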